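/- In the friendship graph Fr_{2m+1} with m ≥ 2, for any signed Roman dominating function f = (V₋₁, V₁, V₂), the set V₋₁ of vertices labeled −1 has cardinality at most m. -/

import Mathlib

open Finset SimpleGraph
open scoped Classical

/-- The sum of `f` over the closed neighborhood of `v` in `G`. -/
noncomputable def closedNbrSum {V : Type*} [Fintype V] (G : SimpleGraph V)
    (f : V → ℤ) (v : V) : ℤ :=
  ∑ u ∈ Finset.univ.filter (fun u => u = v ∨ G.Adj v u), f u

/-- `f` is a signed Roman dominating function on `G`. -/
def IsSRDF {V : Type*} [Fintype V] (G : SimpleGraph V) (f : V → ℤ) : Prop :=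
  (∀ v, f v = -1 ∨ f v = 1 ∨ f v = 2) ∧
  (∀ v, 1 ≤ closedNbrSum G f v) ∧
  (∀ v, f v = -1 → ∃ u, G.Adj v u ∧ f u = 2)

/-- The signed Roman domination number of `G`. -/
noncomputable def gammaSR {V : Type*} [Fintype V] (G : SimpleGraph V) : ℤ :=
  sInf {w : ℤ | ∃ f, IsSRDF G f ∧ w = ∑ v, f v}

/-- The join of two graphs. -/
def graphJoin {V W : Type*} (G : SimpleGraph V) (H : SimpleGraph W) :
    SimpleGraph (V ⊕ W) where
  Adj x y :=
    match x, y with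
    | .inl a, .inl b => G.Adj a b
    | .inr a, .inr b => H.Adj a b
    | _, _ => True
  symm := ⟨by
    rintro (a | a) (b | b) h <;> simp_all <;> exact h.symm⟩
  loopless := ⟨by
    rintro (a | a) h <;> simp_all⟩


/-- The disjoint union of `m` copies of `K₂`. -/
def mK2 (m : ℕ) : SimpleGraph (Fin m × Fin 2) where
  Adj x y := x.1 = y.1 ∧ x.2 ≠ y.2
  symm := ⟨fun x y h => ⟨h.1.symm, h.2.symm⟩⟩
  loopless := ⟨fun x h => h.2 rfl⟩

/-- The friendship graph with `m` triangles sharing a common vertex. -/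
def friendshipGraph (m : ℕ) : SimpleGraph (Fin 1 ⊕ (Fin m × Fin 2)) :=
  graphJoin (⊥ : SimpleGraph (Fin 1)) (mK2 m)


lemma tri (m : ℕ) (f : Fin 1 ⊕ (Fin m × Fin 2) → ℤ)
    (hf : IsSRDF (friendshipGraph m) f) (i : Fin m) :
    1 ≤ f (Sum.inl 0) + f (Sum.inr (i, 0)) + f (Sum.inr (i, 1)) := by
  have h := hf.2.1 (Sum.inr (i, 0))
  have hset : Finset.univ.filter
      (fun u => u = Sum.inr (i, (0 : Fin 2)) ∨ (friendshipGraph m).Adj (Sum.inr (i, 0)) u)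
      = {Sum.inl 0, Sum.inr (i, 0), Sum.inr (i, 1)} := by
    ext u
    simp only [Finset.mem_filter, Finset.mem_univ, true_and, Finset.mem_insert,
      Finset.mem_singleton]
    rcases u with a | ⟨i', j'⟩
    · have : a = 0 := Subsingleton.elim _ _
      subst this
      simp [friendshipGraph, graphJoin]
    · simp only [friendshipGraph, graphJoin, mK2]
      fin_cases j' <;> simp [eq_comm, Prod.ext_iff] <;> tauto
  rw [closedNbrSum, Finset.filter_congr_decidable, hset] at h
  rw [Finset.sum_insert (by simp), Finset.sum_insert (by simp [Prod.ext_iff]),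
    Finset.sum_singleton] at h
  linarith

theorem stmt17 (m : ℕ) (hm : 2 ≤ m) (f : Fin 1 ⊕ (Fin m × Fin 2) → ℤ)
    (hf : IsSRDF (friendshipGraph m) f) :
    (Finset.univ.filter (fun v => f v = -1)).card ≤ m := by
  have hub : ∀ v, f v ≤ 2 := fun v => by rcases hf.1 v with h | h | h <;> omega
  have hmpos : 0 < m := by omega
  by_cases hc : f (Sum.inl 0) = -1
  · have hsub : (Finset.univ.filter (fun v => f v = -1)) ⊆ {Sum.inl 0} := by
      intro v hv
      simp only [Finset.mem_filter, Finset.mem_univ, true_and] at hv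
      simp only [Finset.mem_singleton]
      rcases v with a | ⟨i, j⟩
      · have : a = 0 := Subsingleton.elim _ _
        rw [this]
      · exfalso
        have h1 := tri m f hf i
        have h2 := hub (Sum.inr (i, 0))
        have h3 := hub (Sum.inr (i, 1))
        have hj : j = 0 ∨ j = 1 := by omega
        rcases hj with rfl | rfl <;> omega
    have := Finset.card_le_card hsub
    simp only [Finset.card_singleton] at this
    omega
  · have key : ∀ i : Fin m, ¬ (f (Sum.inr (i, 0)) = -1 ∧ f (Sum.inr (i, 1)) = -1) := by
      rintro i ⟨h0, h1⟩
      have := tri m f hf i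
      have := hub (Sum.inl 0)
      omega
    set g : (Fin 1 ⊕ (Fin m × Fin 2)) → Fin m :=
      fun v => match v with
        | .inl _ => ⟨0, hmpos⟩
        | .inr (i, _) => i with hg
    have hcard := Finset.card_le_card_of_injOn g
      (fun a _ => Finset.mem_univ (g a))
      (s := Finset.univ.filter (fun v => f v = -1)) ?_
    · simpa using hcard
    · intro v hv w hw hvw
      simp only [Finset.coe_filter, Set.mem_setOf_eq, Finset.mem_univ, true_and] at hv hw
      rcases v with a | ⟨i, j⟩
      · exact absurd (by rwa [Subsingleton.elim (0 : Fin 1) a]) hc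
      rcases w with b | ⟨i', k⟩
      · exact absurd (by rwa [Subsingleton.elim (0 : Fin 1) b]) hc
      simp only [hg] at hvw
      subst hvw
      have hj : j = 0 ∨ j = 1 := by omega
      have hk : k = 0 ∨ k = 1 := by omega
      rcases hj with rfl | rfl <;> rcases hk with rfl | rfl
      · rfl
      · exact absurd ⟨hv, hw⟩ (key i)
      · exact absurd ⟨hw, hv⟩ (key i)
      · rfl
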